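/- arXiv:2508.09647 — 8 statements merged into one kernel-verified Lean document; each statement's English description precedes it below -/
import Mathlib

section
/- Let n ≥ 2 and let a₁ ≥ a₂ ≥ ⋯ ≥ aₙ be positive integers satisfying ∏_{i=1}^n aᵢ = ∑_{i=1}^n aᵢ. Then for every k with 1 ≤ k ≤ n, the partial product is bounded by the partial sum plus the number of remaining terms: ∏_{i=1}^k aᵢ ≤ ∑_{i=1}^k aᵢ + (n − k). -/
/-- Fundamental inequality: for a non-increasing sequence of positive integers whose
product equals its sum, every partial product is bounded by the partial sum plus the
number of remaining terms. -/
theorem partial_product_le_partial_sum_add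
    (n : ℕ) (hn : 2 ≤ n) (a : ℕ → ℕ)
    (hpos : ∀ i ∈ Finset.Icc 1 n, 0 < a i)
    (hmono : ∀ i j, 1 ≤ i → i ≤ j → j ≤ n → a j ≤ a i)
    (heq : ∏ i ∈ Finset.Icc 1 n, a i = ∑ i ∈ Finset.Icc 1 n, a i) :
    ∀ k, 1 ≤ k → k ≤ n →
      ∏ i ∈ Finset.Icc 1 k, a i ≤ (∑ i ∈ Finset.Icc 1 k, a i) + (n - k) := by
  have main : ∀ d k, 1 ≤ k → k ≤ n → n - k ≤ d →
      ∏ i ∈ Finset.Icc 1 k, a i ≤ (∑ i ∈ Finset.Icc 1 k, a i) + (n - k) := by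
    intro d
    induction d with
    | zero =>
      intro k hk1 hkn hd
      have : k = n := by omega
      subst this
      simp [heq]
    | succ d ih =>
      intro k hk1 hkn hd
      by_cases hkn' : k = n
      · subst hkn'
        simp [heq]
      · have hk1n : k + 1 ≤ n := by omega
        have h1 := ih (k + 1) (by omega) hk1n (by omega)
        have hins : Finset.Icc 1 (k + 1) = insert (k + 1) (Finset.Icc 1 k) := by
          exact (Finset.insert_Icc_right_eq_Icc_add_one (by omega)).symm
        have hnotmem : (k + 1) ∉ Finset.Icc 1 k := by simp
        rw [hins, Finset.prod_insert hnotmem, Finset.sum_insert hnotmem] at h1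
        have ha : 1 ≤ a (k + 1) := hpos (k + 1) (by simp; omega)
        set P := ∏ i ∈ Finset.Icc 1 k, a i
        set S := ∑ i ∈ Finset.Icc 1 k, a i
        have hm : n - k = (n - (k + 1)) + 1 := by omega
        have h2 : a (k + 1) * P ≤ a (k + 1) * (S + (n - k)) := by
          rw [hm]
          calc a (k + 1) * P ≤ a (k + 1) + S + (n - (k + 1)) := h1
            _ ≤ a (k + 1) * (S + ((n - (k + 1)) + 1)) := by nlinarith
        exact Nat.le_of_mul_le_mul_left h2 (by omega)
  intro k hk1 hkn
  exact main n k hk1 hkn (by omega)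
end

section
/- Let n ≥ 2 and let a₁ ≥ a₂ ≥ ⋯ ≥ aₙ be positive integers satisfying ∏_{i=1}^n aᵢ = ∑_{i=1}^n aᵢ, and let k⋆ be the greatest index k with a_k > 1 (such an index exists). Then for every k with 1 ≤ k < k⋆ one has the strict inequality ∏_{i=1}^k aᵢ < ∑_{i=1}^k aᵢ + (n − k). -/
/-- For a solution of the product-sum equation, the strict inequality
`∏_{i=1}^k aᵢ < ∑_{i=1}^k aᵢ + (n - k)` holds for every `k` with `1 ≤ k < k⋆`,
where `k⋆` is the greatest index whose entry exceeds 1. -/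
theorem partial_product_lt_of_lt_kstar
    (n : ℕ) (hn : 2 ≤ n) (a : ℕ → ℕ)
    (hpos : ∀ i ∈ Finset.Icc 1 n, 0 < a i)
    (hmono : ∀ i j, 1 ≤ i → i ≤ j → j ≤ n → a j ≤ a i)
    (heq : ∏ i ∈ Finset.Icc 1 n, a i = ∑ i ∈ Finset.Icc 1 n, a i)
    (kstar : ℕ) (hk_mem : kstar ∈ Finset.Icc 1 n) (hk_gt : 1 < a kstar)
    (hk_greatest : ∀ k ∈ Finset.Icc 1 n, 1 < a k → k ≤ kstar) :
    ∀ k, 1 ≤ k → k < kstar →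
      ∏ i ∈ Finset.Icc 1 k, a i < (∑ i ∈ Finset.Icc 1 k, a i) + (n - k) := by
  simp only [Finset.mem_Icc] at hk_mem
  obtain ⟨hks1, hksn⟩ := hk_mem
  have hIcc : ∀ m : ℕ, Finset.Icc 1 m = Finset.Ioc 0 m := fun m => Finset.Icc_add_one_left_eq_Ioc 0 m
  have hone : ∀ i, kstar < i → i ≤ n → a i = 1 := by
    intro i hi hin
    by_contra h
    have h1 : 0 < a i := hpos i (Finset.mem_Icc.mpr ⟨by omega, hin⟩)
    have h2 : 1 < a i := by omega
    have := hk_greatest i (Finset.mem_Icc.mpr ⟨by omega, hin⟩) h2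
    omega
  -- equality at kstar
  have hbase : ∏ i ∈ Finset.Ioc 0 kstar, a i
      = (∑ i ∈ Finset.Ioc 0 kstar, a i) + (n - kstar) := by
    have hp : (∏ i ∈ Finset.Ioc 0 kstar, a i) * ∏ i ∈ Finset.Ioc kstar n, a i
        = ∏ i ∈ Finset.Ioc 0 n, a i := Finset.prod_Ioc_consecutive _ (by omega) hksn
    have hs : (∑ i ∈ Finset.Ioc 0 kstar, a i) + ∑ i ∈ Finset.Ioc kstar n, a i
        = ∑ i ∈ Finset.Ioc 0 n, a i := Finset.sum_Ioc_consecutive _ (by omega) hksn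
    have hp1 : ∏ i ∈ Finset.Ioc kstar n, a i = 1 :=
      Finset.prod_eq_one (fun i hi => by
        simp only [Finset.mem_Ioc] at hi; exact hone i hi.1 hi.2)
    have hs1 : ∑ i ∈ Finset.Ioc kstar n, a i = n - kstar := by
      rw [Finset.sum_congr rfl (fun i hi => by
        simp only [Finset.mem_Ioc] at hi; exact hone i hi.1 hi.2)]
      simp [Nat.card_Ioc]
    rw [hIcc] at heq
    rw [hp1, mul_one] at hp
    rw [hs1] at hs
    omega
  -- step: from bound at k+1 get (strict-type) bound at k
  have hstep : ∀ k, 1 ≤ k → k < kstar →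
      (∏ i ∈ Finset.Ioc 0 (k+1), a i ≤ (∑ i ∈ Finset.Ioc 0 (k+1), a i) + (n - (k+1))) →
      ∏ i ∈ Finset.Ioc 0 k, a i ≤ (∑ i ∈ Finset.Ioc 0 k, a i) + (n - (k+1)) := by
    intro k hk1 hkk h
    rw [Finset.prod_Ioc_succ_top (by omega), Finset.sum_Ioc_succ_top (by omega)] at h
    set P := ∏ i ∈ Finset.Ioc 0 k, a i with hP
    set S := ∑ i ∈ Finset.Ioc 0 k, a i with hS
    have hq2 : 2 ≤ a (k+1) := by
      have := hmono (k+1) kstar (by omega) (by omega) hksn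
      omega
    have hP2 : 2 ≤ P := by
      have h1 : a 1 ≤ P := Finset.single_le_prod' (fun i hi => by
        simp only [Finset.mem_Ioc] at hi
        exact hpos i (Finset.mem_Icc.mpr ⟨hi.1, by omega⟩))
        (Finset.mem_Ioc.mpr ⟨by omega, hk1⟩)
      have h2 := hmono 1 kstar le_rfl hks1 hksn
      omega
    have key : P + a (k+1) ≤ P * a (k+1) := by nlinarith
    omega
  -- aux : bound for all 1 ≤ k ≤ kstar
  have aux : ∀ m k, kstar - k = m → 1 ≤ k → k ≤ kstar →
      ∏ i ∈ Finset.Ioc 0 k, a i ≤ (∑ i ∈ Finset.Ioc 0 k, a i) + (n - k) := by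
    intro m
    induction m with
    | zero =>
      intro k hm hk1 hk2
      have : k = kstar := by omega
      subst this
      omega
    | succ m ih =>
      intro k hm hk1 hk2
      have hkk : k < kstar := by omega
      have h1 := ih (k+1) (by omega) (by omega) (by omega)
      have := hstep k hk1 hkk h1
      have : n - (k+1) ≤ n - k := by omega
      omega
  intro k hk1 hkk
  rw [hIcc]
  have h1 := aux (kstar - (k+1)) (k+1) rfl (by omega) (by omega)
  have h2 := hstep k hk1 hkk h1
  have : n - (k+1) < n - k := by omega
  omega
end

section
/- Let n > 2 and 1 ≤ k < n, and let a₁ ≥ a₂ ≥ ⋯ ≥ a_k be positive integers satisfying ∏_{i=1}^k aᵢ ≥ ∑_{i=1}^k aᵢ + (n − k). If a₁', …, a_k' are positive integers with a_j' ≥ a_j for every 1 ≤ j ≤ k and (a₁', …, a_k') ≠ (a₁, …, a_k), then ∏_{i=1}^k aᵢ' > ∑_{i=1}^k aᵢ' + (n − k); in particular, padding (a₁', …, a_k') with n − k ones does not give a solution of the product–sum equation of length n. -/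
lemma aux_prod_sum (a b : ℕ → ℕ) :
    ∀ s : Finset ℕ, (∀ i ∈ s, 1 ≤ a i) → (∀ i ∈ s, a i ≤ b i) →
      (∏ i ∈ s, a i) + (∑ i ∈ s, (b i - a i)) ≤ ∏ i ∈ s, b i := by
  intro s
  induction s using Finset.induction with
  | empty => simp
  | @insert x t hx ih =>
    intro h1 hle
    rw [Finset.prod_insert hx, Finset.prod_insert hx, Finset.sum_insert hx]
    have h1t : ∀ i ∈ t, 1 ≤ a i := fun i hi => h1 i (Finset.mem_insert_of_mem hi)
    have hlet : ∀ i ∈ t, a i ≤ b i := fun i hi => hle i (Finset.mem_insert_of_mem hi)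
    have IH := ih h1t hlet
    have hP : 1 ≤ ∏ i ∈ t, a i := Finset.one_le_prod' h1t
    have hax : 1 ≤ a x := h1 x (Finset.mem_insert_self x t)
    have hbx : a x ≤ b x := hle x (Finset.mem_insert_self x t)
    obtain ⟨d, hd⟩ : ∃ d, b x = a x + d := ⟨b x - a x, by omega⟩
    rw [hd]
    have hdd : a x + d - a x = d := by omega
    rw [hdd]
    have hQ1 : 1 ≤ ∏ i ∈ t, b i := le_trans hP (le_trans (Nat.le_add_right _ _) IH)
    have h2 : a x * ((∏ i ∈ t, a i) + ∑ i ∈ t, (b i - a i)) ≤ a x * ∏ i ∈ t, b i :=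
      Nat.mul_le_mul_left _ IH
    have h3 : d * 1 ≤ d * ∏ i ∈ t, b i := Nat.mul_le_mul_left _ hQ1
    have h4 : 1 * ∑ i ∈ t, (b i - a i) ≤ a x * ∑ i ∈ t, (b i - a i) :=
      Nat.mul_le_mul_right _ hax
    nlinarith [h2, h3, h4]

/-- If a partial sequence already satisfies `∏ ≥ ∑ + (n - k)`, then any entrywise-larger
sequence (differing in at least one entry) satisfies the strict inequality
`∏ > ∑ + (n - k)`; in particular its padding with ones is not a solution of the
product-sum equation of length `n`. -/
theorem increased_sequence_violates_inequality
    (n k : ℕ) (hn : 2 < n) (hk1 : 1 ≤ k) (hkn : k < n) (a a' : ℕ → ℕ)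
    (hpos : ∀ i ∈ Finset.Icc 1 k, 0 < a i)
    (hmono : ∀ i j, 1 ≤ i → i ≤ j → j ≤ k → a j ≤ a i)
    (hineq : (∑ i ∈ Finset.Icc 1 k, a i) + (n - k) ≤ ∏ i ∈ Finset.Icc 1 k, a i)
    (hpos' : ∀ i ∈ Finset.Icc 1 k, 0 < a' i)
    (hge : ∀ j ∈ Finset.Icc 1 k, a j ≤ a' j)
    (hne : ∃ j ∈ Finset.Icc 1 k, a' j ≠ a j) :
    ∏ i ∈ Finset.Icc 1 k, a' i > (∑ i ∈ Finset.Icc 1 k, a' i) + (n - k) := by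
  obtain ⟨j, hj, hja⟩ := hne
  set s : Finset ℕ := Finset.Icc 1 k with hs
  set s' : Finset ℕ := s.erase j with hs'
  have h1 : ∀ i ∈ s, 1 ≤ a i := fun i hi => hpos i hi
  have h1' : ∀ i ∈ s', 1 ≤ a i := fun i hi => h1 i (Finset.mem_of_mem_erase hi)
  have hle' : ∀ i ∈ s', a i ≤ a' i := fun i hi => hge i (Finset.mem_of_mem_erase hi)
  have hprodA : a j * ∏ i ∈ s', a i = ∏ i ∈ s, a i := Finset.mul_prod_erase s a hj
  have hprodB : a' j * ∏ i ∈ s', a' i = ∏ i ∈ s, a' i := Finset.mul_prod_erase s a' hj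
  have hsumA : a j + ∑ i ∈ s', a i = ∑ i ∈ s, a i := Finset.add_sum_erase s a hj
  have hsumB : a' j + ∑ i ∈ s', a' i = ∑ i ∈ s, a' i := Finset.add_sum_erase s a' hj
  -- P' ≥ 2
  have hcard : s.card = k := by simp [hs]
  have hcard' : s'.card = k - 1 := by rw [hs', Finset.card_erase_of_mem hj, hcard]
  have hsumge : (k - 1 : ℕ) ≤ ∑ i ∈ s', a i := by
    calc (k - 1 : ℕ) = ∑ _i ∈ s', 1 := by rw [Finset.sum_const, hcard', smul_eq_mul, mul_one]
    _ ≤ ∑ i ∈ s', a i := Finset.sum_le_sum h1'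
  have hnk : 1 ≤ n - k := by omega
  have hP2 : 2 ≤ ∏ i ∈ s', a i := by
    by_contra h
    have hP1 : ∏ i ∈ s', a i = 1 := by
      have := Finset.one_le_prod' h1'
      omega
    rw [← hprodA, hP1, mul_one] at hineq
    rw [← hsumA] at hineq
    omega
  have IH := aux_prod_sum a a' s' h1' hle'
  have hsum' : ∑ i ∈ s', a' i = (∑ i ∈ s', a i) + ∑ i ∈ s', (a' i - a i) := by
    rw [← Finset.sum_add_distrib]
    exact Finset.sum_congr rfl fun i hi => by have := hle' i hi; omega
  have hdj : a j < a' j := lt_of_le_of_ne (hge j hj) (Ne.symm hja)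
  have haj : 1 ≤ a j := h1 j hj
  -- final arithmetic
  rw [← hprodB, ← hsumB]
  calc (a' j + ∑ i ∈ s', a' i) + (n - k)
      = a' j + ((∑ i ∈ s', a i) + ∑ i ∈ s', (a' i - a i)) + (n - k) := by rw [hsum']
    _ < a' j * ∏ i ∈ s', a' i := by
        have key : (∑ i ∈ s, a i) + (n - k) ≤ a j * ∏ i ∈ s', a i := by rw [hprodA]; exact hineq
        rw [← hsumA] at key
        nlinarith [IH, hP2, hdj, haj, Nat.zero_le (∑ i ∈ s', (a' i - a i))]
end

section
/- Let n ≥ 2 and let a₁ ≥ a₂ ≥ ⋯ ≥ aₙ be positive integers satisfying ∏_{i=1}^n aᵢ = ∑_{i=1}^n aᵢ. Then aᵢ ≤ n for every 1 ≤ i ≤ n. -/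
lemma sum_le_prod_aux (f : ℕ → ℕ) (s : Finset ℕ) (h : ∀ i ∈ s, 1 ≤ f i) :
    (∑ i ∈ s, f i) + 1 ≤ (∏ i ∈ s, f i) + s.card := by
  induction s using Finset.induction_on with
  | empty => simp
  | insert _ _ hnotmem ih =>
    rename_i b t
    rw [Finset.sum_insert hnotmem, Finset.prod_insert hnotmem,
      Finset.card_insert_of_notMem hnotmem]
    have hb : 1 ≤ f b := h b (Finset.mem_insert_self _ _)
    have ht : ∀ i ∈ t, 1 ≤ f i := fun i hi => h i (Finset.mem_insert_of_mem hi)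
    have iht := ih ht
    have hp : 1 ≤ ∏ i ∈ t, f i := Finset.one_le_prod' ht
    nlinarith [iht, hb, hp]

/-- Every entry of a solution of the product-sum equation of length `n` is at most `n`. -/
theorem solution_entries_le
    (n : ℕ) (hn : 2 ≤ n) (a : ℕ → ℕ)
    (hpos : ∀ i ∈ Finset.Icc 1 n, 0 < a i)
    (hmono : ∀ i j, 1 ≤ i → i ≤ j → j ≤ n → a j ≤ a i)
    (heq : ∏ i ∈ Finset.Icc 1 n, a i = ∑ i ∈ Finset.Icc 1 n, a i) :
    ∀ i, 1 ≤ i → i ≤ n → a i ≤ n := by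
  have hsplit : Finset.Icc 1 n = insert 1 (Finset.Icc 2 n) := by
    ext x; simp [Finset.mem_Icc, Finset.mem_insert]; omega
  have h1 : (1 : ℕ) ∉ Finset.Icc 2 n := by simp
  rw [hsplit, Finset.prod_insert h1, Finset.sum_insert h1] at heq
  set P := ∏ i ∈ Finset.Icc 2 n, a i with hP
  set S := ∑ i ∈ Finset.Icc 2 n, a i with hS
  have hposI : ∀ i ∈ Finset.Icc 2 n, 1 ≤ a i := by
    intro i hi
    simp only [Finset.mem_Icc] at hi
    exact hpos i (by simp [Finset.mem_Icc]; omega)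
  have hcard : (Finset.Icc 2 n).card = n - 1 := by
    rw [Nat.card_Icc]; omega
  have hkey : S + 1 ≤ P + (n - 1) := by
    have := sum_le_prod_aux a (Finset.Icc 2 n) hposI
    rw [hcard] at this; exact this
  have hSge : n - 1 ≤ S := by
    calc n - 1 = ∑ _i ∈ Finset.Icc 2 n, 1 := by simp [hcard]
    _ ≤ S := Finset.sum_le_sum hposI
  have ha1 : 1 ≤ a 1 := hpos 1 (by simp [Finset.mem_Icc]; omega)
  have hP2 : 2 ≤ P := by
    by_contra h
    have hP1 : 1 ≤ P := Finset.one_le_prod' hposI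
    have : P = 1 := by omega
    rw [this] at heq
    omega
  -- a 1 * P = a 1 + S, S + 1 ≤ P + n - 1, 2 ≤ P ⟹ a 1 ≤ n
  have ha1n : a 1 ≤ n := by nlinarith [heq, hkey, hP2, ha1, Nat.sub_add_cancel (by omega : 1 ≤ n)]
  intro i hi hin
  exact le_trans (hmono 1 i le_rfl hi hin) ha1n
end

section
/- Let n ≥ 2 and let a₁ ≥ a₂ ≥ ⋯ ≥ aₙ be positive integers satisfying ∏_{i=1}^n aᵢ = ∑_{i=1}^n aᵢ. If a is not the basic solution (that is, a is not the sequence with a₁ = n, a₂ = 2 and a₃ = ⋯ = aₙ = 1), then aᵢ < n for every 1 ≤ i ≤ n. -/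
/-- Every entry of a non-basic solution of the product-sum equation of length `n`
is strictly less than `n`. The basic solution is `a₁ = n, a₂ = 2, a₃ = ⋯ = aₙ = 1`. -/
theorem nonbasic_solution_entries_lt
    (n : ℕ) (hn : 2 ≤ n) (a : ℕ → ℕ)
    (hpos : ∀ i ∈ Finset.Icc 1 n, 0 < a i)
    (hmono : ∀ i j, 1 ≤ i → i ≤ j → j ≤ n → a j ≤ a i)
    (heq : ∏ i ∈ Finset.Icc 1 n, a i = ∑ i ∈ Finset.Icc 1 n, a i)
    (hnotbasic : ¬ (a 1 = n ∧ a 2 = 2 ∧ ∀ i, 3 ≤ i → i ≤ n → a i = 1)) :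
    ∀ i, 1 ≤ i → i ≤ n → a i < n := by
  obtain ⟨m, rfl⟩ : ∃ m, n = m + 2 := ⟨n - 2, by omega⟩
  set n := m + 2 with hndef
  intro i hi1 hin
  by_contra hcon
  push_neg at hcon
  have h1 : n ≤ a 1 := hcon.trans (hmono 1 i le_rfl hi1 hin)
  -- split the product and sum
  have hs1 : Finset.Icc 1 n = insert 1 (Finset.Icc 2 n) := by
    ext x; simp [Finset.mem_Icc]; omega
  have hs2 : Finset.Icc 2 n = insert 2 (Finset.Icc 3 n) := by
    ext x; simp [Finset.mem_Icc]; omega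
  have hnm1 : (1 : ℕ) ∉ Finset.Icc 2 n := by simp
  have hnm2 : (2 : ℕ) ∉ Finset.Icc 3 n := by simp
  set Q := ∏ i ∈ Finset.Icc 3 n, a i with hQ
  set T := ∑ i ∈ Finset.Icc 3 n, a i with hT
  have hnm1' : (1 : ℕ) ∉ insert 2 (Finset.Icc 3 n) := by simp
  have heq' : a 1 * (a 2 * Q) = a 1 + (a 2 + T) := by
    rw [hs1, hs2] at heq
    rwa [Finset.prod_insert hnm1', Finset.prod_insert hnm2,
      Finset.sum_insert hnm1', Finset.sum_insert hnm2] at heq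
  have hcard : (Finset.Icc 3 n).card = m := by
    rw [Nat.card_Icc]; omega
  -- a 2 ≥ 2
  have ha2 : 2 ≤ a 2 := by
    by_contra h2
    have ha2' : a 2 = 1 := by
      have := hpos 2 (by simp [Finset.mem_Icc]; omega); omega
    have hall : ∀ j ∈ Finset.Icc 3 n, a j = 1 := by
      intro j hj
      simp only [Finset.mem_Icc] at hj
      have h1 := hmono 2 j (by omega) (by omega) hj.2
      have h2 := hpos j (by simp [Finset.mem_Icc]; omega)
      omega
    have hQ1 : Q = 1 := by
      rw [hQ, Finset.prod_congr rfl hall, Finset.prod_const_one]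
    have hT1 : T = m := by
      rw [hT, Finset.sum_congr rfl hall, Finset.sum_const, hcard, smul_eq_mul, mul_one]
    rw [ha2', hQ1, hT1] at heq'
    omega
  have ha21 : a 2 ≤ a 1 := hmono 1 2 le_rfl (by omega) (by omega)
  -- bound on T
  have hTb : T ≤ m * a 2 := by
    rw [hT]
    calc ∑ i ∈ Finset.Icc 3 n, a i ≤ ∑ i ∈ Finset.Icc 3 n, a 2 := by
          apply Finset.sum_le_sum
          intro j hj
          simp only [Finset.mem_Icc] at hj
          exact hmono 2 j (by omega) (by omega) hj.2
      _ = m * a 2 := by rw [Finset.sum_const, hcard, smul_eq_mul]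
  -- Q ≥ 1
  have hQpos : 0 < Q := by
    rw [hQ]
    apply Finset.prod_pos
    intro j hj
    simp only [Finset.mem_Icc] at hj
    exact hpos j (by simp [Finset.mem_Icc]; omega)
  -- Q = 1
  have hQ1 : Q = 1 := by
    by_contra hq
    have hQ2 : 2 ≤ Q := by omega
    have hq2 : (2:ℤ) ≤ (Q:ℤ) := by exact_mod_cast hQ2
    have he : (a 1 : ℤ) * ((a 2 : ℤ) * (Q:ℤ)) = (a 1:ℤ) + ((a 2:ℤ) + (T:ℤ)) := by
      exact_mod_cast heq'
    have htb : (T:ℤ) ≤ (m:ℤ) * (a 2:ℤ) := by exact_mod_cast hTb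
    have h1' : (m:ℤ) + 2 ≤ (a 1:ℤ) := by exact_mod_cast h1
    have ha2' : (2:ℤ) ≤ (a 2:ℤ) := by exact_mod_cast ha2
    have hm0 : (0:ℤ) ≤ (m:ℤ) := Int.natCast_nonneg m
    nlinarith [he, htb, h1', ha2', hq2, hm0,
      mul_nonneg (mul_nonneg (by linarith : (0:ℤ) ≤ (a 1:ℤ)) (by linarith : (0:ℤ) ≤ (a 2:ℤ))) (by linarith : (0:ℤ) ≤ (Q:ℤ) - 2),
      mul_nonneg (by linarith : (0:ℤ) ≤ (a 1:ℤ) - ((m:ℤ)+2)) (by linarith : (0:ℤ) ≤ 2*(a 2:ℤ) - 1),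
      mul_nonneg (by linarith : (0:ℤ) ≤ (a 2:ℤ) - 2) (by linarith : (0:ℤ) ≤ (m:ℤ) + 3)]
  -- so all entries from 3 on are 1
  have hall : ∀ j ∈ Finset.Icc 3 n, a j = 1 := by
    rw [hQ] at hQ1
    intro j hj
    have := (Finset.prod_eq_one_iff_of_one_le' ?_).mp hQ1 j hj
    · exact this
    · intro k hk
      simp only [Finset.mem_Icc] at hk
      exact hpos k (by simp [Finset.mem_Icc]; omega)
  have hT1 : T = m := by
    rw [hT, Finset.sum_congr rfl hall, Finset.sum_const, hcard, smul_eq_mul, mul_one]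
  rw [hQ1, hT1, mul_one] at heq'
  -- now a 1 * a 2 = a 1 + a 2 + m, with a 1 ≥ m + 2, a 2 ≥ 2
  have ha2eq : a 2 = 2 := by
    by_contra h2
    have h3 : 3 ≤ a 2 := by omega
    have he : (a 1 : ℤ) * (a 2:ℤ) = (a 1:ℤ) + ((a 2:ℤ) + (m:ℤ)) := by exact_mod_cast heq'
    have h1' : (m:ℤ) + 2 ≤ (a 1:ℤ) := by exact_mod_cast h1
    have h3' : (3:ℤ) ≤ (a 2:ℤ) := by exact_mod_cast h3
    have hm0 : (0:ℤ) ≤ (m:ℤ) := Int.natCast_nonneg m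
    nlinarith [he, h1', h3', hm0,
      mul_nonneg (by linarith : (0:ℤ) ≤ (a 1:ℤ) - ((m:ℤ)+2)) (by linarith : (0:ℤ) ≤ (a 2:ℤ) - 3),
      mul_nonneg (by linarith : (0:ℤ) ≤ (a 2:ℤ) - 3) (by linarith : (0:ℤ) ≤ (m:ℤ) + 1)]
  rw [ha2eq] at heq'
  have ha1 : a 1 = n := by omega
  exact hnotbasic ⟨ha1, ha2eq, fun j h3 hjn => hall j (by simp [Finset.mem_Icc]; omega)⟩
end

section
/- Let n ≥ 2 and 1 ≤ i ≤ n, and suppose a₁ ≥ a₂ ≥ ⋯ ≥ a_i are integers with a_i > 1 satisfying the strict inequality ∏_{j=1}^i a_j < ∑_{j=1}^i a_j + (n − i). Set n' := ∏_{j=1}^i a_j − ∑_{j=1}^i a_j + i. Then i ≤ n' < n, and the sequence (a₁, a₂, …, a_i, 1, …, 1) of length n' (padded with n' − i ones) satisfies ∏_{j=1}^{n'} a_j = ∑_{j=1}^{n'} a_j. -/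
/-- If each of `f 1, …, f i` is at least 2, the sum is at most the product. -/
lemma sum_le_prod_of_two_le (f : ℕ → ℕ) :
    ∀ i : ℕ, 1 ≤ i → (∀ j ∈ Finset.Icc 1 i, 2 ≤ f j) →
      (∑ j ∈ Finset.Icc 1 i, f j) ≤ ∏ j ∈ Finset.Icc 1 i, f j := by
  intro i
  induction i with
  | zero => intro h; omega
  | succ k ih =>
    intro _ hf
    rcases Nat.eq_zero_or_pos k with hk | hk
    · subst hk; simp
    have h1 : (1 : ℕ) ≤ k + 1 := by omega
    rw [Finset.sum_Icc_succ_top h1, Finset.prod_Icc_succ_top h1]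
    have hS : (∑ j ∈ Finset.Icc 1 k, f j) ≤ ∏ j ∈ Finset.Icc 1 k, f j := by
      apply ih hk
      intro j hj
      simp only [Finset.mem_Icc] at hj ⊢
      exact hf j (Finset.mem_Icc.mpr ⟨hj.1, by omega⟩)
    have hP2 : 2 ≤ ∏ j ∈ Finset.Icc 1 k, f j := by
      calc 2 ≤ f 1 := hf 1 (Finset.mem_Icc.mpr ⟨le_rfl, by omega⟩)
        _ ≤ ∏ j ∈ Finset.Icc 1 k, f j := by
          apply Finset.single_le_prod' ?_ (Finset.mem_Icc.mpr ⟨le_rfl, hk⟩)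
          intro j hj
          have hj' := Finset.mem_Icc.mp hj
          have := hf j (Finset.mem_Icc.mpr ⟨hj'.1, by omega⟩)
          omega
    have ha2 : 2 ≤ f (k + 1) := hf (k + 1) (by simp)
    nlinarith [hS, hP2, ha2]

/-- A strict feasibility inequality for a partial sequence yields a genuine solution of
the product-sum equation of some shorter length `n' = ∏ - ∑ + i` with `i ≤ n' < n`,
obtained by padding with ones. -/
theorem feasible_prefix_gives_shorter_solution
    (n i : ℕ) (hn : 2 ≤ n) (hi1 : 1 ≤ i) (hin : i ≤ n) (a : ℕ → ℕ)
    (hmono : ∀ j l, 1 ≤ j → j ≤ l → l ≤ i → a l ≤ a j)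
    (hlast : 1 < a i)
    (hineq : ∏ j ∈ Finset.Icc 1 i, a j < (∑ j ∈ Finset.Icc 1 i, a j) + (n - i)) :
    i ≤ (∏ j ∈ Finset.Icc 1 i, a j) - (∑ j ∈ Finset.Icc 1 i, a j) + i ∧
    (∏ j ∈ Finset.Icc 1 i, a j) - (∑ j ∈ Finset.Icc 1 i, a j) + i < n ∧
    (∏ j ∈ Finset.Icc 1 ((∏ j ∈ Finset.Icc 1 i, a j) - (∑ j ∈ Finset.Icc 1 i, a j) + i),
        (if j ≤ i then a j else 1)) =
      ∑ j ∈ Finset.Icc 1 ((∏ j ∈ Finset.Icc 1 i, a j) - (∑ j ∈ Finset.Icc 1 i, a j) + i),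
        (if j ≤ i then a j else 1) := by
  set P := ∏ j ∈ Finset.Icc 1 i, a j with hP
  set S := ∑ j ∈ Finset.Icc 1 i, a j with hS
  have h2 : ∀ j ∈ Finset.Icc 1 i, 2 ≤ a j := by
    intro j hj
    simp only [Finset.mem_Icc] at hj
    exact lt_of_lt_of_le hlast (hmono j i hj.1 hj.2 le_rfl)
  have hSP : S ≤ P := sum_le_prod_of_two_le a i hi1 h2
  set n' := P - S + i with hn'
  have hin' : i ≤ n' := by omega
  have hn'n : n' < n := by omega
  refine ⟨hin', hn'n, ?_⟩
  have hsplit : Finset.Icc 1 n' = Finset.Icc 1 i ∪ Finset.Icc (i + 1) n' := by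
    ext x; simp only [Finset.mem_Icc, Finset.mem_union]; omega
  have hdisj : Disjoint (Finset.Icc 1 i) (Finset.Icc (i + 1) n') := by
    simp [Finset.disjoint_left, Finset.mem_Icc]
    intro x h1 h2; omega
  rw [hsplit, Finset.prod_union hdisj, Finset.sum_union hdisj]
  have e1 : (∏ j ∈ Finset.Icc 1 i, (if j ≤ i then a j else 1)) = P := by
    apply Finset.prod_congr rfl
    intro j hj; simp only [Finset.mem_Icc] at hj; simp [hj.2]
  have e2 : (∑ j ∈ Finset.Icc 1 i, (if j ≤ i then a j else 1)) = S := by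
    apply Finset.sum_congr rfl
    intro j hj; simp only [Finset.mem_Icc] at hj; simp [hj.2]
  have e3 : (∏ j ∈ Finset.Icc (i + 1) n', (if j ≤ i then a j else 1)) = 1 := by
    apply Finset.prod_eq_one
    intro j hj; simp only [Finset.mem_Icc] at hj
    simp [show ¬ j ≤ i by omega]
  have e4 : (∑ j ∈ Finset.Icc (i + 1) n', (if j ≤ i then a j else 1)) = n' - i := by
    rw [Finset.sum_congr rfl (fun j hj => ?_), Finset.sum_const, smul_eq_mul, mul_one,
      Nat.card_Icc]
    · omega
    · simp only [Finset.mem_Icc] at hj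
      simp [show ¬ j ≤ i by omega]
  rw [e1, e2, e3, e4]
  omega
end

section
/- Let n ≥ 3 and let a₁ ≥ a₂ ≥ ⋯ ≥ aₙ be positive integers satisfying ∏_{i=1}^n aᵢ ≤ ∑_{i=1}^n aᵢ. Let m ≥ 2 be an integer and let k ≥ 1 be the number of indices i with aᵢ ≥ m (assume there is at least one such index). Then k < log n / log m + 1, where logarithms are real logarithms. -/
/-- For `n ≥ 3`, `n < 2 ^ (n - 1)`. -/
lemma aux_lt_two_pow : ∀ n : ℕ, 3 ≤ n → n < 2 ^ (n - 1) := by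
  intro n hn
  induction n with
  | zero => omega
  | succ p ih =>
    rcases Nat.lt_or_ge p 3 with hp | hp
    · interval_cases p <;> simp_all
    · have := ih hp
      have h2 : 2 ^ (p + 1 - 1) = 2 * 2 ^ (p - 1) := by
        rw [← pow_succ']
        congr 1
        omega
      omega

/-- If a non-increasing sequence of positive integers satisfies `∏ aᵢ ≤ ∑ aᵢ`, then
the number `k` of entries that are at least `m` (assumed positive) satisfies
`k < log n / log m + 1`. -/
theorem card_ge_m_lt_log_bound
    (n m : ℕ) (hn : 3 ≤ n) (hm : 2 ≤ m) (a : ℕ → ℕ)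
    (hpos : ∀ i ∈ Finset.Icc 1 n, 0 < a i)
    (hmono : ∀ i j, 1 ≤ i → i ≤ j → j ≤ n → a j ≤ a i)
    (hle : ∏ i ∈ Finset.Icc 1 n, a i ≤ ∑ i ∈ Finset.Icc 1 n, a i)
    (k : ℕ) (hk : k = ((Finset.Icc 1 n).filter (fun i => m ≤ a i)).card)
    (hk1 : 1 ≤ k) :
    (k : ℝ) < Real.log n / Real.log m + 1 := by
  have hkn : k ≤ n := by
    rw [hk]
    calc ((Finset.Icc 1 n).filter (fun i => m ≤ a i)).card
        ≤ (Finset.Icc 1 n).card := Finset.card_filter_le _ _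
      _ = n := by rw [Nat.card_Icc]; omega
  -- entries with index ≤ k are ≥ m
  have hlow : ∀ i, 1 ≤ i → i ≤ k → m ≤ a i := by
    intro i h1 h2
    by_contra hcon
    push_neg at hcon
    have hsub : (Finset.Icc 1 n).filter (fun i => m ≤ a i) ⊆ Finset.Icc 1 (i - 1) := by
      intro j hj
      simp only [Finset.mem_filter, Finset.mem_Icc] at hj ⊢
      obtain ⟨⟨hj1, hjn⟩, hjm⟩ := hj
      refine ⟨hj1, ?_⟩
      by_contra hji
      push_neg at hji
      have hij : i ≤ j := by omega
      have := hmono i j (by omega) hij hjn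
      omega
    have := Finset.card_le_card hsub
    rw [← hk, Nat.card_Icc] at this
    omega
  -- entries with index > k are < m
  have hhigh : ∀ i, k < i → i ≤ n → a i < m := by
    intro i hki hin
    by_contra hcon
    push_neg at hcon
    have hsub : Finset.Icc 1 i ⊆ (Finset.Icc 1 n).filter (fun i => m ≤ a i) := by
      intro j hj
      simp only [Finset.mem_Icc] at hj
      simp only [Finset.mem_filter, Finset.mem_Icc]
      refine ⟨⟨hj.1, by omega⟩, ?_⟩
      exact le_trans hcon (hmono j i hj.1 hj.2 hin)
    have := Finset.card_le_card hsub
    rw [← hk, Nat.card_Icc] at this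
    omega
  have ha1 : m ≤ a 1 := hlow 1 le_rfl hk1
  -- split the interval
  have hsplit : Finset.Icc 1 n = Finset.Icc 1 k ∪ Finset.Ioc k n := by
    ext j
    simp only [Finset.mem_Icc, Finset.mem_union, Finset.mem_Ioc]
    omega
  have hdisj : Disjoint (Finset.Icc 1 k) (Finset.Ioc k n) := by
    rw [Finset.disjoint_left]
    intro j hj1 hj2
    simp only [Finset.mem_Icc] at hj1
    simp only [Finset.mem_Ioc] at hj2
    omega
  -- product lower bound
  have hsplit1 : Finset.Icc 1 k = insert 1 (Finset.Icc 2 k) := by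
    ext j; simp only [Finset.mem_insert, Finset.mem_Icc]; omega
  have hprod2 : m ^ (k - 1) ≤ ∏ i ∈ Finset.Icc 2 k, a i := by
    have := Finset.pow_card_le_prod (Finset.Icc 2 k) a m
      (fun i hi => by
        simp only [Finset.mem_Icc] at hi
        exact hlow i (by omega) hi.2)
    rwa [Nat.card_Icc, show k + 1 - 2 = k - 1 by omega] at this
  have hprodtail : 1 ≤ ∏ i ∈ Finset.Ioc k n, a i := by
    apply Finset.one_le_prod'
    intro i hi
    simp only [Finset.mem_Ioc] at hi
    exact hpos i (by simp only [Finset.mem_Icc]; omega)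
  have hP : a 1 * m ^ (k - 1) ≤ ∏ i ∈ Finset.Icc 1 n, a i := by
    rw [hsplit, Finset.prod_union hdisj, hsplit1,
      Finset.prod_insert (by simp)]
    calc a 1 * m ^ (k - 1) ≤ a 1 * ∏ i ∈ Finset.Icc 2 k, a i :=
          Nat.mul_le_mul_left _ hprod2
      _ ≤ (a 1 * ∏ i ∈ Finset.Icc 2 k, a i) * ∏ i ∈ Finset.Ioc k n, a i :=
          Nat.le_mul_of_pos_right _ hprodtail
  -- sum upper bounds
  have hS1 : ∑ i ∈ Finset.Icc 1 k, a i ≤ k * a 1 := by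
    have := Finset.sum_le_card_nsmul (Finset.Icc 1 k) a (a 1)
      (fun i hi => by
        simp only [Finset.mem_Icc] at hi
        exact hmono 1 i le_rfl hi.1 (by omega))
    rwa [Nat.card_Icc, show k + 1 - 1 = k by omega, smul_eq_mul] at this
  have hS2 : ∑ i ∈ Finset.Ioc k n, a i ≤ (n - k) * (m - 1) := by
    have := Finset.sum_le_card_nsmul (Finset.Ioc k n) a (m - 1)
      (fun i hi => by
        simp only [Finset.mem_Ioc] at hi
        have := hhigh i hi.1 hi.2
        omega)
    rwa [Nat.card_Ioc, smul_eq_mul] at this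
  have hS : ∑ i ∈ Finset.Icc 1 n, a i ≤ k * a 1 + (n - k) * (m - 1) := by
    rw [hsplit, Finset.sum_union hdisj]
    exact Nat.add_le_add hS1 hS2
  -- key: m ^ (k - 1) < n
  have hkey : m ^ (k - 1) < n := by
    by_contra hcon
    push_neg at hcon
    rcases eq_or_lt_of_le hkn with heq | hlt
    · -- k = n : product is too big unconditionally
      have h2 : n < 2 ^ (n - 1) := aux_lt_two_pow n hn
      have h3 : (2:ℕ) ^ (n - 1) ≤ m ^ (n - 1) := Nat.pow_le_pow_left hm _
      rw [heq] at hP hS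
      have hlt2 : n * a 1 < m ^ (n - 1) * a 1 :=
        mul_lt_mul_of_pos_right (by omega)
          (hpos 1 (by simp only [Finset.mem_Icc]; omega))
      have hc : a 1 * m ^ (n - 1) = m ^ (n - 1) * a 1 := mul_comm _ _
      have hnn : n - n = 0 := by omega
      rw [hnn] at hS
      omega
    · -- k < n
      have ha1n : n * a 1 ≤ a 1 * m ^ (k - 1) := by
        rw [mul_comm]
        exact Nat.mul_le_mul le_rfl hcon
      have hstep : (n - k) * (m - 1) < (n - k) * a 1 :=
        mul_lt_mul_of_pos_left (by omega) (by omega)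
      have hsum : k * a 1 + (n - k) * a 1 = n * a 1 := by
        rw [← add_mul]
        congr 1
        omega
      omega
  -- transfer to ℝ
  have hm1R : (1:ℝ) < m := by exact_mod_cast (by omega : 1 < m)
  have hlogm : 0 < Real.log m := Real.log_pos hm1R
  have hcast : ((m:ℝ)) ^ (k - 1) < (n:ℝ) := by exact_mod_cast hkey
  have hlog : Real.log ((m:ℝ) ^ (k - 1)) < Real.log n :=
    Real.log_lt_log (by positivity) hcast
  rw [Real.log_pow] at hlog
  have hdiv : ((k - 1 : ℕ) : ℝ) < Real.log n / Real.log m :=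
    (lt_div_iff₀ hlogm).mpr hlog
  have hcast2 : ((k - 1 : ℕ) : ℝ) = (k : ℝ) - 1 := by
    rw [Nat.cast_sub hk1, Nat.cast_one]
  linarith [hdiv, hcast2 ▸ hdiv]
end

section
/- Let n ≥ 3 and suppose 2n − 1 = a·b with integers a ≥ b ≥ 2 (so that a and b are both odd, since 2n − 1 is odd). Then the sequence of length n given by a₁ = (a+1)/2, a₂ = (b+1)/2, a₃ = 2 and a₄ = ⋯ = aₙ = 1 satisfies ∏_{i=1}^n aᵢ = ∑_{i=1}^n aᵢ; in particular, if 2n − 1 is composite, the product–sum equation of length n has a solution other than the basic solution. -/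
/-- Reble's construction: if `2n - 1 = a * b` with `a ≥ b ≥ 2`, then the sequence
`((a+1)/2, (b+1)/2, 2, 1, …, 1)` of length `n` is a solution of the product-sum
equation. -/
theorem reble_construction
    (n a b : ℕ) (hn : 3 ≤ n) (hb : 2 ≤ b) (hba : b ≤ a) (hab : a * b = 2 * n - 1) :
    ∏ i ∈ Finset.Icc 1 n,
        (if i = 1 then (a + 1) / 2 else if i = 2 then (b + 1) / 2 else
          if i = 3 then 2 else 1) =
      ∑ i ∈ Finset.Icc 1 n,
        (if i = 1 then (a + 1) / 2 else if i = 2 then (b + 1) / 2 else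
          if i = 3 then 2 else 1) := by
  have hodd : Odd (a * b) := by rw [hab]; exact ⟨n - 1, by omega⟩
  obtain ⟨ha, hb'⟩ := Nat.odd_mul.mp hodd
  obtain ⟨x, hx⟩ := ha
  obtain ⟨y, hy⟩ := hb'
  have hset : Finset.Icc 1 n = insert 1 (insert 2 (insert 3 (Finset.Icc 4 n))) := by
    ext i; simp [Finset.mem_Icc]; omega
  have h1 : (1 : ℕ) ∉ insert 2 (insert 3 (Finset.Icc 4 n)) := by simp [Finset.mem_Icc]
  have h2 : (2 : ℕ) ∉ insert 3 (Finset.Icc 4 n) := by simp [Finset.mem_Icc]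
  have h3 : (3 : ℕ) ∉ Finset.Icc 4 n := by simp
  rw [hset, Finset.prod_insert h1, Finset.prod_insert h2, Finset.prod_insert h3,
    Finset.sum_insert h1, Finset.sum_insert h2, Finset.sum_insert h3]
  have hrest : ∀ i ∈ Finset.Icc 4 n,
      (if i = 1 then (a + 1) / 2 else if i = 2 then (b + 1) / 2 else
        if i = 3 then 2 else 1) = 1 := by
    intro i hi
    simp only [Finset.mem_Icc] at hi
    split_ifs <;> omega
  rw [Finset.prod_congr rfl hrest, Finset.sum_congr rfl hrest,
    Finset.prod_const_one, Finset.sum_const, Nat.card_Icc, smul_eq_mul, mul_one]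
  simp only [if_true, if_pos rfl]
  norm_num
  have hA : (a + 1) / 2 = x + 1 := by omega
  have hB : (b + 1) / 2 = y + 1 := by omega
  rw [hA, hB]
  have key : (2 * x + 1) * (2 * y + 1) = 2 * n - 1 := by rw [← hx, ← hy]; exact hab
  have e1 : (2 * x + 1) * (2 * y + 1) = 4 * (x * y) + 2 * x + 2 * y + 1 := by ring
  have e2 : (x + 1) * ((y + 1) * 2) = 2 * (x * y) + 2 * x + 2 * y + 2 := by ring
  omega
end
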